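/- Let f_1, …, f_k be McNaughton functions on [0,1]^n, let C_Φ ⊆ ℝ^k be the convex hull of {(f_1(x), …, f_k(x)) : x ∈ [0,1]^n}, and let β be a book on f_1, …, f_k. Then β is strictly coherent if and only if the point (β_1, …, β_k) belongs to C_Φ and does not belong to the relative boundary of C_Φ. -/

import Mathlib

open Set MeasureTheory

/-- The unit cube `[0,1]^n` in `ℝ^n`. -/
def cube (n : ℕ) : Set (Fin n → ℝ) := Set.Icc 0 1

/-- `f` is a McNaughton function on `[0,1]^n`: continuous on the cube, `[0,1]`-valued there,
and piecewise affine with integer coefficients. -/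
def IsMcNaughton (n : ℕ) (f : (Fin n → ℝ) → ℝ) : Prop :=
  ContinuousOn f (cube n) ∧
  (∀ x ∈ cube n, f x ∈ Set.Icc (0 : ℝ) 1) ∧
  ∃ (m : ℕ) (a : Fin m → Fin n → ℤ) (b : Fin m → ℤ),
    ∀ x ∈ cube n, ∃ j : Fin m, f x = (b j : ℝ) + ∑ i, (a j i : ℝ) * x i

/-- The book `β` on `f 0, …, f (k-1)` is strictly coherent: every possibility of loss
for the bookmaker is paired by a possibility of gain. -/
def StrictlyCoherent (n k : ℕ) (f : Fin k → (Fin n → ℝ) → ℝ) (β : Fin k → ℝ) : Prop :=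
  ∀ σ : Fin k → ℝ, (∃ x ∈ cube n, ∑ i, σ i * (β i - f i x) < 0) →
    ∃ x' ∈ cube n, 0 < ∑ i, σ i * (β i - f i x')

private lemma dot_sub {k : ℕ} (σ v w : Fin k → ℝ) :
    ∑ i, σ i * (v i - w i) = (∑ i, σ i * v i) - ∑ i, σ i * w i := by
  rw [← Finset.sum_sub_distrib]; exact Finset.sum_congr rfl fun i _ => by ring

private lemma dotLinear {k : ℕ} (σ : Fin k → ℝ) :
    IsLinearMap ℝ (fun v : Fin k → ℝ => ∑ i, σ i * v i) := by
  constructor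
  · intro x y; simp [mul_add, Finset.sum_add_distrib]
  · intro c x
    simp only [Pi.smul_apply, smul_eq_mul, Finset.mul_sum]
    exact Finset.sum_congr rfl fun i _ => by ring

private lemma hull_ge {k : ℕ} {Φ : Set (Fin k → ℝ)} (σ : Fin k → ℝ) (c : ℝ)
    (h : ∀ y ∈ Φ, c ≤ ∑ i, σ i * y i) :
    ∀ z ∈ convexHull ℝ Φ, c ≤ ∑ i, σ i * z i := fun z hz =>
  convexHull_min (t := {w : Fin k → ℝ | c ≤ ∑ i, σ i * w i}) h
    (convex_halfSpace_ge (dotLinear σ) c) hz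

/-- For a linear functional `G` on `ℝ^k` given by coefficients `σG`, `G v = ∑ σG i * v i`. -/
private lemma dot_of_linearMap {k : ℕ} (G : (Fin k → ℝ) →ₗ[ℝ] ℝ) (v : Fin k → ℝ) :
    ∑ i, G (fun j => if i = j then 1 else 0) * v i = G v := by
  rw [LinearMap.pi_apply_eq_sum_univ]
  exact Finset.sum_congr rfl fun i _ => by rw [smul_eq_mul, mul_comm]

private lemma mem_intrinsicInterior_iff' {E : Type*} [NormedAddCommGroup E] [NormedSpace ℝ E]
    (s : Set E) (x : E) :
    x ∈ intrinsicInterior ℝ s ↔ x ∈ affineSpan ℝ s ∧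
      ∃ ε > 0, ∀ w ∈ (affineSpan ℝ s : Set E), dist w x < ε → w ∈ s := by
  constructor
  · intro h
    obtain ⟨y, hy, rfl⟩ := mem_intrinsicInterior.1 h
    refine ⟨y.2, ?_⟩
    rw [mem_interior_iff_mem_nhds, Metric.mem_nhds_iff] at hy
    obtain ⟨ε, hε, hball⟩ := hy
    refine ⟨ε, hε, fun w hw hd => ?_⟩
    have : (⟨w, hw⟩ : affineSpan ℝ s) ∈ Metric.ball y ε := by
      simpa [Metric.mem_ball, Subtype.dist_eq] using hd
    exact hball this
  · rintro ⟨hx, ε, hε, h⟩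
    refine mem_intrinsicInterior.2 ⟨⟨x, hx⟩, ?_, rfl⟩
    rw [mem_interior_iff_mem_nhds, Metric.mem_nhds_iff]
    refine ⟨ε, hε, fun z hz => ?_⟩
    exact h z z.2 (by simpa [Metric.mem_ball, Subtype.dist_eq] using hz)

private lemma sum_extend' {ι κ : Type*} [Fintype ι] [Fintype κ] (e : ι ↪ κ)
    {M : Type*} [AddCommMonoid M] (f : κ → M) (g : ι → M)
    (h1 : ∀ i, f (e i) = g i) (h2 : ∀ j, (¬ ∃ i, e i = j) → f j = 0) :
    ∑ j, f j = ∑ i, g i := by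
  have : ∑ j ∈ Finset.univ.map e, f j = ∑ j, f j := by
    apply Finset.sum_subset (Finset.subset_univ _)
    intro j _ hj
    exact h2 j fun ⟨i, hi⟩ => hj (Finset.mem_map.2 ⟨i, Finset.mem_univ i, hi⟩)
  rw [← this, Finset.sum_map]
  exact Finset.sum_congr rfl fun i _ => h1 i

private lemma isCompact_hull {k : ℕ} {Φ : Set (Fin k → ℝ)} (hΦ : IsCompact Φ) (hne : Φ.Nonempty) :
    IsCompact (convexHull ℝ Φ) := by
  classical
  obtain ⟨y0, hy0⟩ := hne
  set K : Set ((Fin (k+1) → ℝ) × (Fin (k+1) → (Fin k → ℝ))) :=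
    (stdSimplex ℝ (Fin (k+1))) ×ˢ (Set.univ.pi fun _ => Φ) with hK
  have hKc : IsCompact K :=
    (isCompact_stdSimplex (𝕜 := ℝ) (ι := Fin (k+1))).prod (isCompact_univ_pi fun _ => hΦ)
  have hmc : Continuous fun p : (Fin (k+1) → ℝ) × (Fin (k+1) → (Fin k → ℝ)) =>
      ∑ j, p.1 j • p.2 j := by
    refine continuous_finset_sum _ fun j _ => ?_
    exact ((continuous_apply j).comp continuous_fst).smul
      ((continuous_apply j).comp continuous_snd)
  have himg : (fun p : (Fin (k+1) → ℝ) × (Fin (k+1) → (Fin k → ℝ)) =>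
      ∑ j, p.1 j • p.2 j) '' K = convexHull ℝ Φ := by
    apply Subset.antisymm
    · rintro _ ⟨⟨w, z⟩, ⟨hw, hz⟩, rfl⟩
      exact (convex_convexHull ℝ Φ).sum_mem (fun j _ => hw.1 j) hw.2
        (fun j _ => subset_convexHull ℝ Φ (hz j (mem_univ j)))
    · intro x hx
      obtain ⟨ι, hfin, z, w, hrange, hindep, hpos, hsum, heq⟩ :=
        eq_pos_convex_span_of_mem_convexHull hx
      have hcard : Fintype.card ι ≤ k + 1 := by
        have h1 := hindep.card_le_finrank_succ
        have h2 : Module.finrank ℝ ↥(vectorSpan ℝ (range z)) ≤ k := by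
          have := Submodule.finrank_le (vectorSpan ℝ (range z))
          simpa [Module.finrank_fin_fun] using this
        omega
      obtain ⟨e⟩ : Nonempty (ι ↪ Fin (k+1)) := by
        rw [Function.Embedding.nonempty_iff_card_le]; simpa using hcard
      set w' : Fin (k+1) → ℝ := Function.extend e w 0 with hw'
      set z' : Fin (k+1) → (Fin k → ℝ) := Function.extend e z (fun _ => y0) with hz'
      have hwe : ∀ i, w' (e i) = w i := fun i => e.injective.extend_apply _ _ _
      have hze : ∀ i, z' (e i) = z i := fun i => e.injective.extend_apply _ _ _
      have hw0 : ∀ j, (¬ ∃ i, e i = j) → w' j = 0 := by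
        intro j hj; rw [hw', Function.extend_apply' _ _ _ hj]; rfl
      have hwnn : ∀ j, 0 ≤ w' j := by
        intro j
        by_cases hj : ∃ i, e i = j
        · obtain ⟨i, rfl⟩ := hj; rw [hwe]; exact (hpos i).le
        · rw [hw0 j hj]
      have hwsum : ∑ j, w' j = 1 := by rw [sum_extend' e w' w hwe hw0]; exact hsum
      have hzΦ : ∀ j, z' j ∈ Φ := by
        intro j
        by_cases hj : ∃ i, e i = j
        · obtain ⟨i, rfl⟩ := hj; rw [hze]; exact hrange ⟨i, rfl⟩
        · rw [hz', Function.extend_apply' _ _ _ hj]; exact hy0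
      have hxeq : ∑ j, w' j • z' j = x := by
        rw [sum_extend' e (fun j => w' j • z' j) (fun i => w i • z i)
          (fun i => by show w' (e i) • z' (e i) = w i • z i; rw [hwe, hze])
          (fun j hj => by show w' j • z' j = 0; rw [hw0 j hj, zero_smul])]
        exact heq
      exact ⟨(w', z'), ⟨⟨hwnn, hwsum⟩, fun j _ => hzΦ j⟩, hxeq⟩
  rw [← himg]
  exact hKc.image hmc

theorem stmt12 (n k : ℕ) (f : Fin k → (Fin n → ℝ) → ℝ) (hf : ∀ i, IsMcNaughton n (f i))
    (β : Fin k → ℝ) (hβ : ∀ i, β i ∈ Set.Icc (0 : ℝ) 1) :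
    StrictlyCoherent n k f β ↔
      β ∈ convexHull ℝ ((fun x => fun i => f i x) '' cube n) ∧
      β ∉ intrinsicFrontier ℝ (convexHull ℝ ((fun x => fun i => f i x) '' cube n)) := by
  classical
  set Φ : Set (Fin k → ℝ) := (fun x => fun i => f i x) '' cube n with hΦdef
  set C : Set (Fin k → ℝ) := convexHull ℝ Φ with hCdef
  have hcubec : IsCompact (cube n) := isCompact_Icc
  have hcubene : (cube n).Nonempty := ⟨0, Set.mem_Icc.2 ⟨le_rfl, zero_le_one⟩⟩
  have hcont : ContinuousOn (fun x => fun i => f i x) (cube n) :=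
    continuousOn_pi.2 fun i => (hf i).1
  have hΦc : IsCompact Φ := hcubec.image_of_continuousOn hcont
  have hΦne : Φ.Nonempty := hcubene.image _
  have hCc : IsCompact C := isCompact_hull hΦc hΦne
  have hCclosed : IsClosed C := hCc.isClosed
  have hCconv : Convex ℝ C := convex_convexHull ℝ Φ
  have hΦC : Φ ⊆ C := subset_convexHull ℝ Φ
  -- reduce RHS to intrinsic interior
  have hiff : (β ∈ C ∧ β ∉ intrinsicFrontier ℝ C) ↔ β ∈ intrinsicInterior ℝ C := by
    constructor
    · rintro ⟨h1, h2⟩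
      rw [← closure_diff_intrinsicInterior] at h2
      by_contra h4
      exact h2 ⟨subset_closure h1, h4⟩
    · intro h
      refine ⟨intrinsicInterior_subset h, fun h2 => ?_⟩
      rw [← closure_diff_intrinsicInterior] at h2
      exact h2.2 h
  rw [hiff]
  constructor
  · -- strictly coherent → relative interior
    intro hSC
    -- first, β ∈ C
    have hβC : β ∈ C := by
      by_contra hβC
      obtain ⟨g, u, hgu, hub⟩ := geometric_hahn_banach_point_closed hCconv hCclosed hβC
      set σ : Fin k → ℝ := fun i => g.toLinearMap (fun j => if i = j then 1 else 0) with hσdef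
      have hdot : ∀ v : Fin k → ℝ, ∑ i, σ i * v i = g v := fun v =>
        dot_of_linearMap g.toLinearMap v
      obtain ⟨x0, hx0⟩ := hcubene
      have hhyp : ∃ x ∈ cube n, ∑ i, σ i * (β i - f i x) < 0 := by
        refine ⟨x0, hx0, ?_⟩
        have h1 : u < g (fun i => f i x0) := hub _ (hΦC ⟨x0, hx0, rfl⟩)
        rw [dot_sub, hdot, hdot]
        have : g (fun i => f i x0) = g (fun i => f i x0) := rfl
        linarith [hgu]
      obtain ⟨x', hx', hgt⟩ := hSC σ hhyp
      rw [dot_sub, hdot, hdot] at hgt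
      have h2 : u < g (fun i => f i x') := hub _ (hΦC ⟨x', hx', rfl⟩)
      linarith [hgu]
    -- now the relative interior
    by_contra hni
    set A : AffineSubspace ℝ (Fin k → ℝ) := affineSpan ℝ C with hAdef
    have hβA : β ∈ A := mem_affineSpan ℝ hβC
    set V : Submodule ℝ (Fin k → ℝ) := A.direction with hVdef
    set D : Set V := {v : V | β + ↑v ∈ C} with hDdef
    have hD : Convex ℝ D := by
      intro v1 h1 v2 h2 a b ha hb hab
      have := hCconv h1 h2 ha hb hab
      have heq : a • (β + (v1 : Fin k → ℝ)) + b • (β + (v2 : Fin k → ℝ))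
          = β + ↑(a • v1 + b • v2) := by
        push_cast
        rw [smul_add, smul_add, show a • β + a • (v1 : Fin k → ℝ) + (b • β + b • (v2 : Fin k → ℝ))
          = (a + b) • β + (a • (v1 : Fin k → ℝ) + b • (v2 : Fin k → ℝ)) by
            rw [add_smul]; abel, hab, one_smul]
      show β + ↑(a • v1 + b • v2) ∈ C
      rw [← heq]; exact this
    have h0D : (0 : V) ∈ D := by show β + ((0 : V) : Fin k → ℝ) ∈ C; simp [hβC]
    -- the affine span of D is everything
    have hspan : affineSpan ℝ D = ⊤ := by
      have hspan0 : Submodule.span ℝ D = (⊤ : Submodule ℝ V) := by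
        rw [eq_top_iff]
        intro v _
        have hv : (v : Fin k → ℝ) ∈ vectorSpan ℝ C := by
          rw [← direction_affineSpan]; exact v.2
        have hle : vectorSpan ℝ C ≤ (Submodule.span ℝ D).map V.subtype := by
          rw [vectorSpan_def]
          refine Submodule.span_le.2 ?_
          rintro _ ⟨c1, hc1, c2, hc2, rfl⟩
          have hd1 : c1 - β ∈ V := A.vsub_mem_direction (mem_affineSpan ℝ hc1) hβA
          have hd2 : c2 - β ∈ V := A.vsub_mem_direction (mem_affineSpan ℝ hc2) hβA
          have hm1 : (⟨c1 - β, hd1⟩ : V) ∈ D := by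
            show β + (c1 - β) ∈ C; rwa [add_sub_cancel]
          have hm2 : (⟨c2 - β, hd2⟩ : V) ∈ D := by
            show β + (c2 - β) ∈ C; rwa [add_sub_cancel]
          refine ⟨⟨c1 - β, hd1⟩ - ⟨c2 - β, hd2⟩, ?_, ?_⟩
          · exact sub_mem (Submodule.subset_span hm1) (Submodule.subset_span hm2)
          · show (c1 - β) - (c2 - β) = c1 -ᵥ c2; rw [vsub_eq_sub]; abel
        obtain ⟨u, hu, huv⟩ := hle hv
        rwa [show u = v from Subtype.coe_injective huv] at hu
      rw [AffineSubspace.affineSpan_eq_top_iff_vectorSpan_eq_top_of_nonempty ℝ ↥V ↥V ⟨0, h0D⟩]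
      rw [eq_top_iff, ← hspan0]
      refine Submodule.span_le.2 fun d hd => ?_
      have : d - 0 ∈ D -ᵥ D := ⟨d, hd, 0, h0D, rfl⟩
      rw [sub_zero] at this
      exact Submodule.subset_span (by simpa using this)
    have hint : (interior D).Nonempty := by
      rw [hD.interior_nonempty_iff_affineSpan_eq_top]; exact hspan
    -- 0 is not in the interior of D
    have h0i : (0 : V) ∉ interior D := by
      intro h0
      apply hni
      rw [mem_intrinsicInterior_iff']
      refine ⟨hβA, ?_⟩
      rw [mem_interior_iff_mem_nhds, Metric.mem_nhds_iff] at h0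
      obtain ⟨ε, hε, hball⟩ := h0
      refine ⟨ε, hε, fun w hw hd => ?_⟩
      have hwv : w - β ∈ V := A.vsub_mem_direction hw hβA
      have : (⟨w - β, hwv⟩ : V) ∈ Metric.ball (0 : V) ε := by
        rw [Metric.mem_ball, dist_zero_right]
        calc ‖(⟨w - β, hwv⟩ : V)‖ = ‖w - β‖ := rfl
          _ = dist w β := (dist_eq_norm w β).symm
          _ < ε := hd
      have := hball this
      show w ∈ C
      have h2 : β + (w - β) ∈ C := this
      rwa [add_sub_cancel] at h2
    -- separate
    obtain ⟨g, hg⟩ := geometric_hahn_banach_open_point (hD.interior) isOpen_interior h0i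
    have hg0 : ∀ a ∈ interior D, g a < 0 := by
      intro a ha; have := hg a ha; rwa [map_zero] at this
    obtain ⟨a0, ha0⟩ := hint
    have hga0 : g a0 < 0 := hg0 a0 ha0
    have hgle : ∀ d ∈ D, g d ≤ 0 := by
      intro d hd
      by_contra hdpos
      push_neg at hdpos
      set t : ℝ := g d / (g d - g a0) with ht
      have htpos : 0 < t := div_pos hdpos (by linarith)
      have htle : t ≤ 1 := by
        rw [div_le_one (by linarith)]; linarith
      have hmem : d + t • (a0 - d) ∈ interior D :=
        hD.add_smul_mem_interior hd (by simpa using ha0) ⟨htpos, htle⟩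
      have := hg0 _ hmem
      rw [map_add, _root_.map_smul, map_sub, smul_eq_mul] at this
      have heq : g d + t * (g a0 - g d) = 0 := by
        have hne : g d - g a0 ≠ 0 := by linarith
        rw [ht]; field_simp; ring
      linarith
    -- extend g to the whole space
    obtain ⟨q, hq⟩ := Submodule.exists_isCompl V
    set π : (Fin k → ℝ) →ₗ[ℝ] V := V.projectionOnto q hq with hπ
    set G : (Fin k → ℝ) →ₗ[ℝ] ℝ := g.toLinearMap.comp π with hG
    have hGv : ∀ v : V, G (v : Fin k → ℝ) = g v := by
      intro v
      simp [hG, hπ, Submodule.projectionOnto_apply_left]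
    set σ : Fin k → ℝ := fun i => -(G (fun j => if i = j then 1 else 0)) with hσdef
    have hdot : ∀ v : Fin k → ℝ, ∑ i, σ i * v i = -(G v) := by
      intro v
      rw [← dot_of_linearMap G v, ← Finset.sum_neg_distrib]
      exact Finset.sum_congr rfl fun i _ => by rw [hσdef]; ring
    have hdot2 : ∀ v w : Fin k → ℝ, ∑ i, σ i * (v i - w i) = G w - G v := by
      intro v w; rw [dot_sub, hdot, hdot]; ring
    -- all points of C have G-value at most G β
    have hCle : ∀ c ∈ C, G c ≤ G β := by
      intro c hc
      have hcv : c - β ∈ V := A.vsub_mem_direction (mem_affineSpan ℝ hc) hβA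
      have hcd : (⟨c - β, hcv⟩ : V) ∈ D := by
        show β + (c - β) ∈ C; rwa [add_sub_cancel]
      have := hgle _ hcd
      rw [← hGv] at this
      have h2 : G (c - β) ≤ 0 := this
      rw [map_sub] at h2; linarith
    -- and some point of C has strictly smaller G-value
    have ha0D : a0 ∈ D := interior_subset ha0
    have hc0 : β + (a0 : Fin k → ℝ) ∈ C := ha0D
    have hc0lt : G (β + (a0 : Fin k → ℝ)) < G β := by
      rw [map_add, hGv]; linarith
    -- get a cube point with smaller value
    have hdotneg : ∀ v : Fin k → ℝ, ∑ i, (fun i => -σ i) i * v i = G v := by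
      intro v
      have := hdot v
      have h2 : ∑ i, (fun i => -σ i) i * v i = -∑ i, σ i * v i := by
        rw [← Finset.sum_neg_distrib]
        exact Finset.sum_congr rfl fun i _ => by ring
      rw [h2, this, neg_neg]
    have hhyp : ∃ x ∈ cube n, ∑ i, σ i * (β i - f i x) < 0 := by
      by_contra hcon
      push_neg at hcon
      have hΦge : ∀ y ∈ Φ, G β ≤ ∑ i, (fun i => -σ i) i * y i := by
        rintro _ ⟨x0', hx0', rfl⟩
        have h1 := hcon x0' hx0'
        rw [hdot2] at h1
        rw [hdotneg]
        exact le_of_sub_nonneg h1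
      have := hull_ge (fun i => -σ i) (G β) hΦge _ hc0
      rw [hdotneg] at this
      linarith
    obtain ⟨x', hx', hgt⟩ := hSC σ hhyp
    rw [hdot2] at hgt
    have := hCle _ (hΦC ⟨x', hx', rfl⟩)
    linarith
  · -- relative interior → strictly coherent
    intro hri σ ⟨x, hx, hlt⟩
    rw [dot_sub] at hlt
    obtain ⟨hβA, ε, hε, hball⟩ := (mem_intrinsicInterior_iff' C β).1 hri
    set y : Fin k → ℝ := fun i => f i x with hy
    have hyC : y ∈ C := hΦC ⟨x, hx, rfl⟩
    set t : ℝ := ε / (2 * (‖β - y‖ + 1)) with ht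
    have hnn : (0:ℝ) < ‖β - y‖ + 1 := by positivity
    have htpos : 0 < t := by positivity
    set z : Fin k → ℝ := β + t • (β - y) with hz
    have hzA : z ∈ affineSpan ℝ C := by
      have hv : β - y ∈ (affineSpan ℝ C).direction :=
        AffineSubspace.vsub_mem_direction hβA (mem_affineSpan ℝ hyC)
      have := AffineSubspace.vadd_mem_of_mem_direction
        (Submodule.smul_mem _ t hv) hβA
      simpa [hz, add_comm] using this
    have hdz : dist z β < ε := by
      rw [hz, dist_eq_norm, add_sub_cancel_left, norm_smul, Real.norm_eq_abs,
        abs_of_pos htpos, ht]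
      rw [div_mul_eq_mul_div, div_lt_iff₀ (by positivity)]
      nlinarith [norm_nonneg (β - y)]
    have hzC : z ∈ C := hball z hzA hdz
    have hzval : ∑ i, σ i * z i < ∑ i, σ i * β i := by
      have hexp : ∑ i, σ i * z i
          = (∑ i, σ i * β i) + t * ((∑ i, σ i * β i) - ∑ i, σ i * y i) := by
        rw [hz]
        rw [show (∑ i, σ i * (β + t • (β - y)) i)
            = ∑ i, (σ i * β i + t * (σ i * (β i - y i))) from
          Finset.sum_congr rfl fun i _ => by simp [Pi.add_apply, Pi.smul_apply]; ring]
        rw [Finset.sum_add_distrib, ← Finset.mul_sum, dot_sub]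
      rw [hexp]
      nlinarith
    have hhyp : ∃ x' ∈ cube n, (∑ i, σ i * f i x') < ∑ i, σ i * β i := by
      by_contra hcon
      push_neg at hcon
      have hΦge : ∀ w ∈ Φ, (∑ i, σ i * β i) ≤ ∑ i, σ i * w i := by
        rintro _ ⟨x0', hx0', rfl⟩
        exact hcon x0' hx0'
      have := hull_ge σ _ hΦge _ hzC
      linarith
    obtain ⟨x', hx', hlt'⟩ := hhyp
    refine ⟨x', hx', ?_⟩
    rw [dot_sub]
    exact sub_pos.2 hlt'
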